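/- Let V ⊂ ℝ² be a finite set of points with pairwise distinct inter-point distances, |V| ≥ 2. Define for each i ∈ V its nearest neighbor nn(i) = argmin_{j ≠ i} dist(i,j). Then the undirected nearest-neighbor graph, with edge (i,j) iff i = nn(j) or j = nn(i), is acyclic. -/

import Mathlib

open SimpleGraph

private lemma aux_cons {V' : Type*} {G : SimpleGraph V'} {a : V'} (p : G.Walk a a)
    (h : p.length ≠ 0) :
    ∃ (x : V') (hx : G.Adj a x) (q : G.Walk x a), p = SimpleGraph.Walk.cons hx q := by
  cases p with
  | nil => simp at h
  | cons hx q => exact ⟨_, hx, q, rfl⟩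

private lemma key (V : Finset (EuclideanSpace ℝ (Fin 2)))
    (hdist : ∀ i ∈ V, ∀ j ∈ V, ∀ k ∈ V, ∀ l ∈ V,
      i ≠ j → k ≠ l → dist i j = dist k l → (i = k ∧ j = l) ∨ (i = l ∧ j = k))
    (nn : EuclideanSpace ℝ (Fin 2) → EuclideanSpace ℝ (Fin 2))
    (hnn : ∀ i ∈ V, nn i ∈ V ∧ nn i ≠ i ∧
      ∀ j ∈ V, j ≠ i → dist i (nn i) ≤ dist i j)
    {v : {x // x ∈ V}}
    {p : (SimpleGraph.fromRel (fun a b : {x // x ∈ V} => nn a.1 = b.1)).Walk v v}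
    (hp : p.IsCycle) {a b : {x // x ∈ V}} (hab : nn a.1 = b.1)
    (hmax : ∀ e ∈ p.edges, ∀ (x y : {x // x ∈ V}), e = s(x, y) → dist x.1 y.1 ≤ dist a.1 b.1)
    (hmem : s(a, b) ∈ p.edges) : False := by
  classical
  obtain ⟨hbV, hba, hamin⟩ := hnn a.1 a.2
  -- rotate the cycle to start at a
  have haS : a ∈ p.support := SimpleGraph.Walk.fst_mem_support_of_mem_edges p hmem
  set p' := p.rotate a haS with hp'def
  have hp' : p'.IsCycle := hp.rotate haS
  have hrot : p'.edges ~r p.edges := p.rotate_edges a haS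
  have hlen : p'.length ≠ 0 := by
    have := hp'.three_le_length; omega
  obtain ⟨x, hax, q, hq⟩ := aux_cons p' hlen
  have hqlen : q.edges ≠ [] := by
    have h3 := hp'.three_le_length
    rw [hq] at h3
    simp only [SimpleGraph.Walk.length_cons] at h3
    intro h
    have := q.length_edges
    rw [h] at this
    simp at this
    omega
  -- decompose the reverse
  have hrlen : p'.reverse.length ≠ 0 := by
    rwa [SimpleGraph.Walk.length_reverse]
  obtain ⟨y, hay, qr, hqr⟩ := aux_cons p'.reverse hrlen
  -- edges equations
  have he1 : p'.edges = s(a, x) :: q.edges := by rw [hq]; simp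
  have he2 : p'.edges.reverse = s(a, y) :: qr.edges := by
    rw [← SimpleGraph.Walk.edges_reverse, hqr]; simp
  -- s(a,y) ∈ q.edges
  have hyq : s(a, y) ∈ q.edges := by
    rw [he1] at he2
    simp only [List.reverse_cons] at he2
    obtain ⟨c, t, hct⟩ : ∃ c t, q.edges.reverse = c :: t := by
      cases hqe : q.edges.reverse with
      | nil => exact absurd (by simpa using hqe) hqlen
      | cons c t => exact ⟨c, t, rfl⟩
    rw [hct] at he2
    simp only [List.cons_append, List.cons.injEq] at he2
    have : s(a, y) ∈ q.edges.reverse := by rw [hct, he2.1]; exact List.mem_cons_self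
    simpa using this
  have hnodup : p'.edges.Nodup := hp'.isTrail.edges_nodup
  have hxy : x ≠ y := by
    intro h
    rw [he1] at hnodup
    have : s(a, x) ∉ q.edges := (List.nodup_cons.mp hnodup).1
    rw [← h] at hyq
    exact this hyq
  -- a ≠ b
  have hab' : a ≠ b := by
    intro h
    apply hba
    rw [hab, h]
  -- pick c ≠ b among x, y
  obtain ⟨c, hcb, hadj, hce⟩ : ∃ c : {x // x ∈ V}, c ≠ b ∧ (SimpleGraph.fromRel (fun a b : {x // x ∈ V} => nn a.1 = b.1)).Adj a c ∧ s(a, c) ∈ p'.edges := by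
    by_cases hx : x = b
    · refine ⟨y, ?_, hay, ?_⟩
      · rw [← hx]; exact fun h => hxy h.symm
      · rw [he1]; exact List.mem_cons_of_mem _ hyq
    · exact ⟨x, hx, hax, by rw [he1]; exact List.mem_cons_self⟩
  have hca : c.1 ≠ a.1 := fun h => (SimpleGraph.ne_of_adj _ hadj) (Subtype.ext h.symm)
  -- max property
  have h1 : dist a.1 c.1 ≤ dist a.1 b.1 :=
    hmax _ (hrot.mem_iff.mp hce) a c rfl
  have h2 : dist a.1 b.1 ≤ dist a.1 c.1 := by
    rw [← hab]
    exact hamin c.1 c.2 hca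
  have heq : dist a.1 c.1 = dist a.1 b.1 := le_antisymm h1 h2
  have hab1 : a.1 ≠ b.1 := by
    rw [← hab]; exact fun h => hba h.symm
  rcases hdist a.1 a.2 c.1 c.2 a.1 a.2 b.1 b.2 (Ne.symm hca) hab1 heq with ⟨_, h⟩ | ⟨h, _⟩
  · exact hcb (Subtype.ext h)
  · exact hab1 h

theorem stmt_4 (V : Finset (EuclideanSpace ℝ (Fin 2))) (hV : 2 ≤ V.card)
    (hdist : ∀ i ∈ V, ∀ j ∈ V, ∀ k ∈ V, ∀ l ∈ V,
      i ≠ j → k ≠ l → dist i j = dist k l → (i = k ∧ j = l) ∨ (i = l ∧ j = k))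
    (nn : EuclideanSpace ℝ (Fin 2) → EuclideanSpace ℝ (Fin 2))
    (hnn : ∀ i ∈ V, nn i ∈ V ∧ nn i ≠ i ∧
      ∀ j ∈ V, j ≠ i → dist i (nn i) ≤ dist i j) :
    (SimpleGraph.fromRel (fun a b : {x // x ∈ V} => nn a.1 = b.1)).IsAcyclic := by
  classical
  intro v p hp
  -- edge weight function
  set f : Sym2 {x // x ∈ V} → ℝ :=
    Sym2.lift ⟨fun x y => dist x.1 y.1, fun x y => dist_comm x.1 y.1⟩ with hf
  have hnil : p.edges ≠ [] := by
    intro h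
    have h3 := hp.three_le_length
    have hl := p.length_edges
    rw [h] at hl
    simp at hl
    omega
  have hne : p.edges.toFinset.Nonempty :=
    ⟨p.edges.head hnil, List.mem_toFinset.mpr (List.head_mem hnil)⟩
  obtain ⟨e, heS, hemax⟩ := p.edges.toFinset.exists_max_image f hne
  have hemem : e ∈ p.edges := List.mem_toFinset.mp heS
  have hmax' : ∀ e' ∈ p.edges, f e' ≤ f e := fun e' he' =>
    hemax e' (List.mem_toFinset.mpr he')
  induction e using Sym2.ind with
  | _ a b =>
    have hadj := p.edges_subset_edgeSet hemem
    rw [SimpleGraph.mem_edgeSet, SimpleGraph.fromRel_adj] at hadj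
    have hfe : f s(a, b) = dist a.1 b.1 := rfl
    rcases hadj.2 with h | h
    · exact key V hdist nn hnn hp h
        (fun e' he' x y hxy => by
          have := hmax' e' he'
          rw [hxy] at this
          exact this) hemem
    · refine key V hdist nn hnn hp h
        (fun e' he' x y hxy => by
          have := hmax' e' he'
          rw [hxy] at this
          calc dist x.1 y.1 ≤ dist a.1 b.1 := this
          _ = dist b.1 a.1 := dist_comm _ _) ?_
      rw [Sym2.eq_swap] at hemem
      exact hemem
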